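/- For every real number t with 0 ≤ t < 1 the series ∑_{m=1}^{∞} (ζ(2m)/m)·t^m converges and equals log Γ(1−√t) + log Γ(1+√t), where Γ is the Gamma function (for t = 0 both sides equal 0). -/

import Mathlib

/-- The Riemann zeta value `ζ(s) = ∑_{n ≥ 1} n^{−s}` for a natural exponent `s`. -/
noncomputable def zetaSum (s : ℕ) : ℝ := ∑' n : ℕ, 1 / ((n : ℝ) + 1) ^ s

lemma summable_aux (p : ℕ) (hp : 2 ≤ p) :
    Summable (fun n : ℕ => 1 / ((n : ℝ) + 1) ^ p) := by
  have h0 : Summable (fun n : ℕ => 1 / (n : ℝ) ^ p) :=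
    Real.summable_one_div_nat_pow.mpr (by omega)
  have h := (summable_nat_add_iff 1).mpr h0
  exact h.congr fun n => by push_cast; ring

/-- For every real `0 ≤ t < 1`, the series `∑_{m≥1} (ζ(2m)/m)·t^m` converges and equals
`log Γ(1−√t) + log Γ(1+√t)`. -/
theorem zeta_series_eq_log_Gamma (t : ℝ) (ht0 : 0 ≤ t) (ht1 : t < 1) :
    HasSum (fun m : ℕ => zetaSum (2 * (m + 1)) / ((m : ℝ) + 1) * t ^ (m + 1))
      (Real.log (Real.Gamma (1 - Real.sqrt t)) + Real.log (Real.Gamma (1 + Real.sqrt t))) := by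
  rcases eq_or_lt_of_le ht0 with h0 | ht0'
  · -- t = 0
    rw [← h0]
    simp only [ne_eq, Real.sqrt_zero, sub_zero, add_zero, Real.Gamma_one, Real.log_one]
    convert hasSum_zero with m
    simp
  -- t > 0
  set x := Real.sqrt t with hxdef
  have hx0 : 0 < x := Real.sqrt_pos.mpr ht0'
  have hx2 : x ^ 2 = t := Real.sq_sqrt ht0
  have hx1 : x < 1 := by
    rw [show (1 : ℝ) = Real.sqrt 1 by simp]
    exact Real.sqrt_lt_sqrt ht0 ht1
  set y : ℕ → ℝ := fun n => t / ((n : ℝ) + 1) ^ 2 with hydef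
  have hn1 : ∀ n : ℕ, (1 : ℝ) ≤ ((n : ℝ) + 1) ^ 2 := by
    intro n
    have : (1 : ℝ) ≤ (n : ℝ) + 1 := by linarith [Nat.cast_nonneg (α := ℝ) n]
    nlinarith
  have hy0 : ∀ n, 0 ≤ y n := fun n => div_nonneg ht0 (by positivity)
  have hyt : ∀ n, y n ≤ t := by
    intro n
    rw [hydef]
    calc t / ((n : ℝ) + 1) ^ 2 ≤ t / 1 := by
          apply div_le_div_of_nonneg_left ht0 one_pos (hn1 n)
      _ = t := div_one t
  have hy1 : ∀ n, y n < 1 := fun n => lt_of_le_of_lt (hyt n) ht1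
  set F : ℕ × ℕ → ℝ := fun p => (y p.1) ^ (p.2 + 1) / ((p.2 : ℝ) + 1) with hFdef
  have hF0 : 0 ≤ F := fun p => div_nonneg (pow_nonneg (hy0 p.1) _) (by positivity)
  -- fiberwise over n : log series
  have hfib_n : ∀ n : ℕ, HasSum (fun m => F (n, m)) (-Real.log (1 - y n)) := by
    intro n
    exact Real.hasSum_pow_div_log_of_abs_lt_one (x := y n)
      (by rw [abs_of_nonneg (hy0 n)]; exact hy1 n)
  -- fiberwise over m : zeta values
  have hfib_m : ∀ m : ℕ, HasSum (fun n => F (n, m))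
      (zetaSum (2 * (m + 1)) / ((m : ℝ) + 1) * t ^ (m + 1)) := by
    intro m
    have hs : HasSum (fun n : ℕ => 1 / ((n : ℝ) + 1) ^ (2 * (m + 1)))
        (zetaSum (2 * (m + 1))) :=
      (summable_aux _ (by omega)).hasSum
    have h := hs.mul_left (t ^ (m + 1) / ((m : ℝ) + 1))
    have heq : (fun n : ℕ => t ^ (m + 1) / ((m : ℝ) + 1) * (1 / ((n : ℝ) + 1) ^ (2 * (m + 1))))
        = fun n : ℕ => F (n, m) := by
      funext n
      rw [hFdef]
      simp only [hydef]
      rw [div_pow, pow_mul]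
      field_simp
    have hval : t ^ (m + 1) / ((m : ℝ) + 1) * zetaSum (2 * (m + 1))
        = zetaSum (2 * (m + 1)) / ((m : ℝ) + 1) * t ^ (m + 1) := by ring
    rw [heq, hval] at h
    exact h
  -- summability of the log-series
  have hlog_le : ∀ n, -Real.log (1 - y n) ≤ (t / (1 - t)) * (1 / ((n : ℝ) + 1) ^ 2) := by
    intro n
    have h1y : 0 < 1 - y n := by linarith [hy1 n]
    have := Real.log_le_sub_one_of_pos (x := (1 - y n)⁻¹) (by positivity)
    rw [Real.log_inv] at this
    have h2 : (1 - y n)⁻¹ - 1 = y n / (1 - y n) := by field_simp; ring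
    rw [h2] at this
    refine this.trans ?_
    have h3 : y n / (1 - y n) ≤ y n / (1 - t) := by
      apply div_le_div_of_nonneg_left (hy0 n) (by linarith) (by linarith [hyt n])
    refine h3.trans (le_of_eq ?_)
    rw [hydef]
    have hne : (1 : ℝ) - t ≠ 0 := by linarith
    have hne2 : ((n : ℝ) + 1) ^ 2 ≠ 0 := by positivity
    field_simp
  have hSlog : Summable (fun n => -Real.log (1 - y n)) := by
    apply Summable.of_nonneg_of_le
    · intro n
      rw [neg_nonneg]
      exact Real.log_nonpos (by linarith [hy1 n]) (by linarith [hy0 n])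
    · exact hlog_le
    · exact (summable_aux 2 le_rfl).mul_left _
  -- summability of F
  have hFsum : Summable F := by
    rw [summable_prod_of_nonneg hF0]
    constructor
    · exact fun n => (hfib_n n).summable
    · apply hSlog.congr
      intro n
      exact ((hfib_n n).tsum_eq).symm
  -- the value of the log series via Euler's product
  have hsin_pos : 0 < Real.sin (Real.pi * x) := by
    apply Real.sin_pos_of_pos_of_lt_pi (by positivity)
    calc Real.pi * x < Real.pi * 1 := by
          exact mul_lt_mul_of_pos_left hx1 Real.pi_pos
      _ = Real.pi := mul_one _
  set L : ℝ := Real.sin (Real.pi * x) / (Real.pi * x) with hLdef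
  have hL_pos : 0 < L := div_pos hsin_pos (by positivity)
  have hprod : Filter.Tendsto
      (fun N : ℕ => ∏ j ∈ Finset.range N, (1 - y j)) Filter.atTop (nhds L) := by
    have h := Real.tendsto_euler_sin_prod x
    have h2 := h.div_const (Real.pi * x)
    rw [hLdef]
    convert h2 using 2 with N
    rw [mul_comm, mul_div_assoc, div_self (by positivity), mul_one]
    apply Finset.prod_congr rfl
    intro j _
    rw [hydef, hx2]
  have hlog_sum : HasSum (fun n => -Real.log (1 - y n)) (-Real.log L) := by
    rw [hSlog.hasSum_iff_tendsto_nat]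
    have hcont : Filter.Tendsto
        (fun N : ℕ => -Real.log (∏ j ∈ Finset.range N, (1 - y j)))
        Filter.atTop (nhds (-Real.log L)) :=
      (((Real.continuousAt_log hL_pos.ne').tendsto.comp hprod).neg)
    apply hcont.congr
    intro N
    have hs : ∑ i ∈ Finset.range N, -Real.log (1 - y i)
        = -∑ i ∈ Finset.range N, Real.log (1 - y i) := by
      simp
    rw [hs, neg_inj, Real.log_prod]
    intro j _
    exact (by linarith [hy1 j] : (0:ℝ) < 1 - y j).ne'
  -- identify the target value
  have hA : Real.log (Real.Gamma (1 - x)) + Real.log (Real.Gamma (1 + x)) = -Real.log L := by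
    have hG1 : 0 < Real.Gamma (1 - x) := Real.Gamma_pos_of_pos (by linarith)
    have hG2 : 0 < Real.Gamma (1 + x) := Real.Gamma_pos_of_pos (by linarith)
    rw [← Real.log_mul hG1.ne' hG2.ne']
    have hGadd : Real.Gamma (1 + x) = x * Real.Gamma x := by
      rw [add_comm]
      exact Real.Gamma_add_one hx0.ne'
    have hrefl : Real.Gamma x * Real.Gamma (1 - x) = Real.pi / Real.sin (Real.pi * x) :=
      Real.Gamma_mul_Gamma_one_sub x
    have : Real.Gamma (1 - x) * Real.Gamma (1 + x) = L⁻¹ := by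
      have h1 : Real.Gamma (1 - x) * (x * Real.Gamma x)
          = x * (Real.pi / Real.sin (Real.pi * x)) := by
        rw [← hrefl]; ring
      rw [hGadd, h1, hLdef, inv_div, ← mul_div_assoc, mul_comm x Real.pi]
    rw [this, Real.log_inv]
  rw [hA]
  -- put everything together with Fubini
  have hFtotal : HasSum F (-Real.log L) := by
    have h2 : HasSum (fun n => -Real.log (1 - y n)) (∑' p, F p) :=
      hFsum.hasSum.prod_fiberwise hfib_n
    have h3 : (∑' p : ℕ × ℕ, F p) = -Real.log L := h2.unique hlog_sum
    exact h3 ▸ hFsum.hasSum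
  have hswap : HasSum (F ∘ (Equiv.prodComm ℕ ℕ)) (-Real.log L) :=
    ((Equiv.prodComm ℕ ℕ).hasSum_iff).mpr hFtotal
  exact hswap.prod_fiberwise (fun m => hfib_m m)
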